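/- Variational expression for the two-parameter Rényi conditional entropy: for all α, β ∈ (0,∞), (α−1) · H̃_{α,β}(X|Y)_{P_XY} = min over probability distributions Q_XY on 𝒳×𝒴 that are absolutely continuous with respect to P_XY of ( (α(1−β)/β) · D(Q_Y‖P_Y) + α · D(Q_XY‖P_XY) + (α−1) · H(X|Y)_{Q_XY} ), where Q_Y is the marginal of Q_XY on 𝒴. -/

import Mathlib

open scoped BigOperators

noncomputable section

variable {𝓧 𝓨 : Type*} [Fintype 𝓧] [Fintype 𝓨]

/-- Marginal distribution of the second component. -/
def pY (P : 𝓧 × 𝓨 → ℝ) (y : 𝓨) : ℝ := ∑ x, P (x, y)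

/-- Conditional distribution `P_{X|Y}(x|y)`. -/
def pCond (P : 𝓧 × 𝓨 → ℝ) (x : 𝓧) (y : 𝓨) : ℝ := P (x, y) / pY P y

/-- Two-parameter Rényi conditional entropy `H̃_{α,β}(X|Y)` for `α ≠ 1`. -/
def Htilde (P : 𝓧 × 𝓨 → ℝ) (α β : ℝ) : ℝ :=
  α / (β * (1 - α)) *
    Real.logb 2 (∑ y, if 0 < pY P y then
      pY P y * (∑ x, pCond P x y ^ α) ^ (β / α) else 0)

/-- Shannon conditional entropy `H(X|Y)`. -/
def shannonCond (P : 𝓧 × 𝓨 → ℝ) : ℝ :=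
  -∑ p, if 0 < P p then P p * Real.logb 2 (pCond P p.1 p.2) else 0

/-- Two-parameter Rényi conditional entropy, continuously extended at `α = 1`. -/
def HtildeE (P : 𝓧 × 𝓨 → ℝ) (α β : ℝ) : ℝ :=
  if α = 1 then shannonCond P else Htilde P α β

/-- Relative entropy `D(Q‖P)` (for `Q` absolutely continuous w.r.t. `P`). -/
def relEnt {𝓩 : Type*} [Fintype 𝓩] (Q P : 𝓩 → ℝ) : ℝ :=
  ∑ z, if 0 < Q z then Q z * Real.logb 2 (Q z / P z) else 0

lemma logb2_rpow {x : ℝ} (hx : 0 < x) (y : ℝ) :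
    Real.logb 2 (x ^ y) = y * Real.logb 2 x := by
  rw [Real.logb, Real.log_rpow hx, Real.logb]; ring

lemma pY_nonneg (P : 𝓧 × 𝓨 → ℝ) (hP : ∀ p, 0 ≤ P p) (y : 𝓨) : 0 ≤ pY P y :=
  Finset.sum_nonneg fun x _ => hP (x, y)

lemma sum_pY (P : 𝓧 × 𝓨 → ℝ) : ∑ y, pY P y = ∑ p, P p := by
  rw [Fintype.sum_prod_type_right]; rfl

lemma le_pY (P : 𝓧 × 𝓨 → ℝ) (hP : ∀ p, 0 ≤ P p) (p : 𝓧 × 𝓨) : P p ≤ pY P p.2 := by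
  have := Finset.single_le_sum (f := fun x => P (x, p.2))
    (fun x _ => hP (x, p.2)) (Finset.mem_univ p.1)
  simpa [pY] using this

lemma pY_eq_zero {P : 𝓧 × 𝓨 → ℝ} (hP : ∀ p, 0 ≤ P p) {y : 𝓨} (h : pY P y = 0)
    (x : 𝓧) : P (x, y) = 0 := by
  have := (Finset.sum_eq_zero_iff_of_nonneg (fun x _ => hP (x, y))).mp h
  exact this x (Finset.mem_univ x)

lemma sum_ite_mul {𝓩 : Type*} [Fintype 𝓩] (q f : 𝓩 → ℝ) (c : ℝ) :
    c * (∑ z, if 0 < q z then q z * f z else 0)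
      = ∑ z, if 0 < q z then q z * (c * f z) else 0 := by
  rw [Finset.mul_sum]; exact Finset.sum_congr rfl fun z _ => by split <;> ring

lemma sum_ite_const {𝓩 : Type*} [Fintype 𝓩] (q : 𝓩 → ℝ) (hq0 : ∀ z, 0 ≤ q z)
    (hq1 : ∑ z, q z = 1) (c : ℝ) :
    (∑ z, if 0 < q z then q z * c else 0) = c := by
  have : (∑ z, if 0 < q z then q z * c else 0) = ∑ z, q z * c := by
    refine Finset.sum_congr rfl fun z _ => ?_
    rcases (hq0 z).lt_or_eq with h | h
    · rw [if_pos h]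
    · rw [if_neg (by rw [← h]; exact lt_irrefl 0), ← h, zero_mul]
  rw [this, ← Finset.sum_mul, hq1, one_mul]

lemma marg_sum (Q : 𝓧 × 𝓨 → ℝ) (hQ0 : ∀ p, 0 ≤ Q p) (c : 𝓨 → ℝ) :
    (∑ y, if 0 < pY Q y then pY Q y * c y else 0)
      = ∑ p, if 0 < Q p then Q p * c p.2 else 0 := by
  rw [Fintype.sum_prod_type_right]
  refine Finset.sum_congr rfl fun y _ => ?_
  by_cases hy : 0 < pY Q y
  · rw [if_pos hy]
    have : (∑ x, if 0 < Q (x, y) then Q (x, y) * c y else 0) = ∑ x, Q (x, y) * c y := by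
      refine Finset.sum_congr rfl fun x _ => ?_
      rcases (hQ0 (x, y)).lt_or_eq with h | h
      · rw [if_pos h]
      · rw [if_neg (by rw [← h]; exact lt_irrefl 0), ← h, zero_mul]
    rw [this, ← Finset.sum_mul]; rfl
  · have h0 : pY Q y = 0 := le_antisymm (not_lt.mp hy) (pY_nonneg Q hQ0 y)
    rw [if_neg hy]
    refine (Finset.sum_eq_zero fun x _ => ?_).symm
    rw [if_neg]; rw [pY_eq_zero hQ0 h0 x]; exact lt_irrefl 0

lemma gibbs_nonneg {𝓩 : Type*} [Fintype 𝓩] (q w : 𝓩 → ℝ) (hq0 : ∀ z, 0 ≤ q z)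
    (hq1 : ∑ z, q z = 1) (hw0 : ∀ z, 0 ≤ w z) (hw1 : ∑ z, w z ≤ 1)
    (hqw : ∀ z, 0 < q z → 0 < w z) :
    0 ≤ ∑ z, if 0 < q z then q z * Real.logb 2 (q z / w z) else 0 := by
  have h2 : (0:ℝ) < Real.log 2 := Real.log_pos one_lt_two
  have key : ∀ z ∈ Finset.univ, (if 0 < q z then (q z - w z) / Real.log 2 else 0)
      ≤ (if 0 < q z then q z * Real.logb 2 (q z / w z) else 0) := by
    intro z _
    by_cases hz : 0 < q z
    · rw [if_pos hz, if_pos hz]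
      have hwz := hqw z hz
      have hlog : Real.log (w z / q z) ≤ w z / q z - 1 :=
        Real.log_le_sub_one_of_pos (div_pos hwz hz)
      have h3 : q z * Real.log (w z / q z) ≤ q z * (w z / q z - 1) :=
        mul_le_mul_of_nonneg_left hlog hz.le
      rw [Real.log_div (ne_of_gt hwz) (ne_of_gt hz)] at h3
      have h4 : q z * (w z / q z - 1) = w z - q z := by field_simp
      rw [h4] at h3
      rw [Real.logb, Real.log_div (ne_of_gt hz) (ne_of_gt hwz), ← mul_div_assoc]
      rw [div_le_div_iff₀ h2 h2]
      nlinarith [h3]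
    · rw [if_neg hz, if_neg hz]
  have lower : (0:ℝ) ≤ ∑ z, if 0 < q z then (q z - w z) / Real.log 2 else 0 := by
    have e1 : (∑ z, if 0 < q z then (q z - w z) / Real.log 2 else 0)
        = (∑ z ∈ Finset.univ.filter (fun z => 0 < q z), (q z - w z)) / Real.log 2 := by
      rw [Finset.sum_filter, Finset.sum_div]
      exact Finset.sum_congr rfl fun z _ => by split <;> simp
    rw [e1]
    apply div_nonneg _ h2.le
    rw [Finset.sum_sub_distrib]
    have e2 : ∑ z ∈ Finset.univ.filter (fun z => 0 < q z), q z = 1 := by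
      rw [Finset.sum_filter_of_ne, hq1]
      intro z _ hz; exact lt_of_le_of_ne (hq0 z) (Ne.symm hz)
    have e3 : ∑ z ∈ Finset.univ.filter (fun z => 0 < q z), w z ≤ 1 := by
      refine le_trans ?_ hw1
      exact Finset.sum_le_sum_of_subset_of_nonneg (Finset.filter_subset _ _)
        (fun z _ _ => hw0 z)
    linarith
  exact le_trans lower (Finset.sum_le_sum key)

/-- `A(y) = ∑_x p(x|y)^α`. -/
def Af (P : 𝓧 × 𝓨 → ℝ) (α : ℝ) (y : 𝓨) : ℝ := ∑ x, pCond P x y ^ α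
/-- Normalizing constant. -/
def Zf (P : 𝓧 × 𝓨 → ℝ) (α β : ℝ) : ℝ :=
  ∑ y, if 0 < pY P y then pY P y * Af P α y ^ (β / α) else 0
/-- Optimal marginal. -/
def Sf (P : 𝓧 × 𝓨 → ℝ) (α β : ℝ) (y : 𝓨) : ℝ :=
  (if 0 < pY P y then pY P y * Af P α y ^ (β / α) else 0) / Zf P α β
/-- Optimal conditional. -/
def rf (P : 𝓧 × 𝓨 → ℝ) (α : ℝ) (x : 𝓧) (y : 𝓨) : ℝ := pCond P x y ^ α / Af P α y

variable {P : 𝓧 × 𝓨 → ℝ} {α β : ℝ}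

lemma pCond_nonneg (hP : ∀ p, 0 ≤ P p) (x : 𝓧) (y : 𝓨) : 0 ≤ pCond P x y :=
  div_nonneg (hP (x, y)) (pY_nonneg P hP y)

lemma Af_nonneg (hP : ∀ p, 0 ≤ P p) (y : 𝓨) : 0 ≤ Af P α y :=
  Finset.sum_nonneg fun x _ => Real.rpow_nonneg (pCond_nonneg hP x y) α

lemma Af_pos (hP : ∀ p, 0 ≤ P p) {y : 𝓨} (hy : 0 < pY P y) : 0 < Af P α y := by
  obtain ⟨x, -, hx⟩ := Finset.exists_lt_of_sum_lt (f := fun _ : 𝓧 => (0:ℝ))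
    (g := fun x => P (x, y)) (by simpa [pY] using hy)
  have hc : 0 < pCond P x y := div_pos hx hy
  calc (0:ℝ) < pCond P x y ^ α := Real.rpow_pos_of_pos hc α
    _ ≤ Af P α y := Finset.single_le_sum
        (f := fun x => pCond P x y ^ α)
        (fun x _ => Real.rpow_nonneg (pCond_nonneg hP x y) α) (Finset.mem_univ x)

lemma Zf_term_nonneg (hP : ∀ p, 0 ≤ P p) (y : 𝓨) :
    0 ≤ if 0 < pY P y then pY P y * Af P α y ^ (β / α) else 0 := by
  split
  · exact mul_nonneg (pY_nonneg P hP (y := y)) (Real.rpow_nonneg (Af_nonneg hP y) _)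
  · exact le_refl 0

lemma Zf_pos (hP : ∀ p, 0 ≤ P p) (hPsum : ∑ p, P p = 1) : 0 < Zf P α β := by
  have hy : ∃ y, 0 < pY P y := by
    by_contra h
    push_neg at h
    have : ∑ y, pY P y = 0 := Finset.sum_eq_zero fun y _ =>
      le_antisymm (h y) (pY_nonneg P hP y)
    rw [sum_pY, hPsum] at this; norm_num at this
  obtain ⟨y, hy⟩ := hy
  refine Finset.sum_pos' (fun y _ => Zf_term_nonneg hP y) ⟨y, Finset.mem_univ y, ?_⟩
  rw [if_pos hy]
  exact mul_pos hy (Real.rpow_pos_of_pos (Af_pos hP hy) _)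

lemma Sf_nonneg (hP : ∀ p, 0 ≤ P p) (hPsum : ∑ p, P p = 1) (y : 𝓨) :
    0 ≤ Sf P α β y :=
  div_nonneg (Zf_term_nonneg hP y) (Zf_pos hP hPsum).le

lemma Sf_pos (hP : ∀ p, 0 ≤ P p) (hPsum : ∑ p, P p = 1) {y : 𝓨} (hy : 0 < pY P y) :
    0 < Sf P α β y := by
  rw [Sf, if_pos hy]
  exact div_pos (mul_pos hy (Real.rpow_pos_of_pos (Af_pos hP hy) _)) (Zf_pos hP hPsum)

lemma sum_Sf (hP : ∀ p, 0 ≤ P p) (hPsum : ∑ p, P p = 1) :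
    ∑ y, Sf P α β y = 1 := by
  simp only [Sf]
  rw [← Finset.sum_div]
  exact div_self (ne_of_gt (Zf_pos hP hPsum))

lemma rf_nonneg (hP : ∀ p, 0 ≤ P p) (x : 𝓧) (y : 𝓨) : 0 ≤ rf P α x y :=
  div_nonneg (Real.rpow_nonneg (pCond_nonneg hP x y) α) (Af_nonneg hP y)

lemma rf_pos (hP : ∀ p, 0 ≤ P p) {x : 𝓧} {y : 𝓨} (hxy : 0 < P (x, y)) :
    0 < rf P α x y := by
  have hy : 0 < pY P y := lt_of_lt_of_le hxy (le_pY P hP (x, y))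
  exact div_pos (Real.rpow_pos_of_pos (div_pos hxy hy) α) (Af_pos hP hy)

lemma sum_rf (hP : ∀ p, 0 ≤ P p) {y : 𝓨} (hy : 0 < pY P y) :
    ∑ x, rf P α x y = 1 := by
  rw [show (∑ x, rf P α x y) = (∑ x, pCond P x y ^ α) / Af P α y from
    (Finset.sum_div _ _ _).symm]
  exact div_self (ne_of_gt (Af_pos hP hy))

lemma target_eq (hP : ∀ p, 0 ≤ P p) (hPsum : ∑ p, P p = 1) (hβ : 0 < β) :
    (α - 1) * HtildeE P α β = -(α / β) * Real.logb 2 (Zf P α β) := by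
  by_cases h1 : α = 1
  · subst h1
    simp only [HtildeE, if_pos rfl, sub_self, zero_mul]
    have hZ : Zf P 1 β = 1 := by
      have key : ∀ y : 𝓨, (if 0 < pY P y then pY P y * Af P 1 y ^ (β / 1) else 0)
          = pY P y := by
        intro y; by_cases hy : 0 < pY P y
        · rw [if_pos hy]
          have hA : Af P 1 y = 1 := by
            simp only [Af, pCond, Real.rpow_one]
            rw [← Finset.sum_div]
            exact div_self (ne_of_gt hy)
          rw [hA, Real.one_rpow, mul_one]
        · rw [if_neg hy]
          exact (le_antisymm (not_lt.mp hy) (pY_nonneg P hP y)).symm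
      simp only [Zf]
      rw [Finset.sum_congr rfl (fun y _ => key y), sum_pY, hPsum]
    rw [hZ, Real.logb_one]; ring
  · simp only [HtildeE, if_neg h1, Htilde]
    have hZ : (∑ y, if 0 < pY P y then
        pY P y * (∑ x, pCond P x y ^ α) ^ (β / α) else 0) = Zf P α β := rfl
    rw [hZ]
    have h1' : (1:ℝ) - α ≠ 0 := fun h => h1 (by linarith)
    field_simp
    ring

lemma F_eq (hP : ∀ p, 0 ≤ P p) (hPsum : ∑ p, P p = 1) (hα : 0 < α) (hβ : 0 < β)
    (Q : 𝓧 × 𝓨 → ℝ) (hQ0 : ∀ p, 0 ≤ Q p) (hQ1 : ∑ p, Q p = 1)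
    (hac : ∀ p, P p = 0 → Q p = 0) :
    α * (1 - β) / β * relEnt (pY Q) (pY P) + α * relEnt Q P + (α - 1) * shannonCond Q
    = -(α / β) * Real.logb 2 (Zf P α β)
      + (α / β) * relEnt (pY Q) (Sf P α β)
      + relEnt Q (fun p => pY Q p.2 * rf P α p.1 p.2) := by
  simp only [relEnt, shannonCond]
  rw [marg_sum Q hQ0 (fun y => Real.logb 2 (pY Q y / pY P y)),
      marg_sum Q hQ0 (fun y => Real.logb 2 (pY Q y / Sf P α β y))]
  rw [sum_ite_mul Q _ (α * (1 - β) / β), sum_ite_mul Q _ α, sum_ite_mul Q _ (α / β)]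
  have hsh : (α - 1) * -(∑ p, if 0 < Q p then Q p * Real.logb 2 (pCond Q p.1 p.2) else 0)
      = ∑ p, if 0 < Q p then Q p * (-(α - 1) * Real.logb 2 (pCond Q p.1 p.2)) else 0 := by
    rw [← sum_ite_mul]; ring
  rw [hsh]
  rw [show -(α / β) * Real.logb 2 (Zf P α β)
      = ∑ p, if 0 < Q p then Q p * (-(α / β) * Real.logb 2 (Zf P α β)) else 0 from
      (sum_ite_const Q hQ0 hQ1 _).symm]
  rw [← Finset.sum_add_distrib, ← Finset.sum_add_distrib,
      ← Finset.sum_add_distrib, ← Finset.sum_add_distrib]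
  refine Finset.sum_congr rfl fun p _ => ?_
  by_cases h : 0 < Q p
  · simp only [if_pos h]
    have hPp : 0 < P p := lt_of_le_of_ne (hP p)
      (fun e => absurd (hac p e.symm) h.ne')
    have hu : 0 < pY P p.2 := lt_of_lt_of_le hPp (le_pY P hP p)
    have hm : 0 < pY Q p.2 := lt_of_lt_of_le h (le_pY Q hQ0 p)
    have hcP : pCond P p.1 p.2 = P p / pY P p.2 := by simp [pCond]
    have hc : 0 < pCond P p.1 p.2 := by rw [hcP]; exact div_pos hPp hu
    have hA : 0 < Af P α p.2 := Af_pos hP hu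
    have hZ : 0 < Zf P α β := Zf_pos hP hPsum
    have hr : 0 < rf P α p.1 p.2 :=
      div_pos (Real.rpow_pos_of_pos hc α) hA
    have hS : Sf P α β p.2 = pY P p.2 * Af P α p.2 ^ (β / α) / Zf P α β := by
      rw [Sf, if_pos hu]
    have hcQ : pCond Q p.1 p.2 = Q p / pY Q p.2 := by simp [pCond]
    have e1 : Real.logb 2 (pY Q p.2 / pY P p.2)
        = Real.logb 2 (pY Q p.2) - Real.logb 2 (pY P p.2) :=
      Real.logb_div hm.ne' hu.ne'
    have e2 : Real.logb 2 (Q p / P p) = Real.logb 2 (Q p) - Real.logb 2 (P p) :=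
      Real.logb_div (ne_of_gt h) hPp.ne'
    have e3 : Real.logb 2 (pCond Q p.1 p.2)
        = Real.logb 2 (Q p) - Real.logb 2 (pY Q p.2) := by
      rw [hcQ]; exact Real.logb_div (ne_of_gt h) hm.ne'
    have e4 : Real.logb 2 (pY Q p.2 / Sf P α β p.2)
        = Real.logb 2 (pY Q p.2) - (Real.logb 2 (pY P p.2)
            + β / α * Real.logb 2 (Af P α p.2) - Real.logb 2 (Zf P α β)) := by
      rw [hS, Real.logb_div hm.ne'
            (ne_of_gt (div_pos (mul_pos hu (Real.rpow_pos_of_pos hA _)) hZ)),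
          Real.logb_div (ne_of_gt (mul_pos hu (Real.rpow_pos_of_pos hA _))) hZ.ne',
          Real.logb_mul hu.ne' (ne_of_gt (Real.rpow_pos_of_pos hA _)),
          logb2_rpow hA]
    have e5 : Real.logb 2 (Q p / (pY Q p.2 * rf P α p.1 p.2))
        = Real.logb 2 (Q p) - (Real.logb 2 (pY Q p.2)
            + (α * (Real.logb 2 (P p) - Real.logb 2 (pY P p.2))
               - Real.logb 2 (Af P α p.2))) := by
      rw [Real.logb_div (ne_of_gt h) (ne_of_gt (mul_pos hm hr)),
          Real.logb_mul hm.ne' hr.ne', rf,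
          Real.logb_div (ne_of_gt (Real.rpow_pos_of_pos hc α)) hA.ne',
          logb2_rpow hc, hcP, Real.logb_div hPp.ne' hu.ne']
    rw [e1, e2, e3, e4, e5]
    field_simp
    ring
  · simp only [if_neg h]

lemma relEnt_self {𝓩 : Type*} [Fintype 𝓩] (f : 𝓩 → ℝ) : relEnt f f = 0 := by
  refine Finset.sum_eq_zero fun z _ => ?_
  split
  · next h => rw [div_self (ne_of_gt h), Real.logb_one, mul_zero]
  · rfl

/-- The optimal distribution. -/
def Qstar (P : 𝓧 × 𝓨 → ℝ) (α β : ℝ) : 𝓧 × 𝓨 → ℝ :=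
  fun p => Sf P α β p.2 * rf P α p.1 p.2

lemma pY_Qstar (hP : ∀ p, 0 ≤ P p) (y : 𝓨) :
    pY (Qstar P α β) y = Sf P α β y := by
  simp only [pY, Qstar]
  rw [← Finset.mul_sum]
  by_cases hy : 0 < pY P y
  · rw [sum_rf hP hy, mul_one]
  · rw [show Sf P α β y = 0 by rw [Sf, if_neg hy, zero_div], zero_mul]

lemma pY_Q_pos_imp (Q : 𝓧 × 𝓨 → ℝ) (hP : ∀ p, 0 ≤ P p) (hQ0 : ∀ p, 0 ≤ Q p)
    (hac : ∀ p, P p = 0 → Q p = 0) {y : 𝓨} (hy : 0 < pY Q y) : 0 < pY P y := by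
  by_contra hnp
  have h0 : pY P y = 0 := le_antisymm (not_lt.mp hnp) (pY_nonneg P hP y)
  have : pY Q y = 0 := Finset.sum_eq_zero fun x _ => hac (x, y) (pY_eq_zero hP h0 x)
  rw [this] at hy; exact lt_irrefl 0 hy


/-- variational expression
`(α−1)·H̃_{α,β}(X|Y) = min_{Q_XY ≪ P_XY} ((α(1−β)/β)·D(Q_Y‖P_Y) + α·D(Q_XY‖P_XY)
  + (α−1)·H(X|Y)_{Q_XY})`. -/
theorem HtildeE_variational
    [Nonempty 𝓧] [Nonempty 𝓨]
    (P : 𝓧 × 𝓨 → ℝ) (hP : ∀ p, 0 ≤ P p) (hPsum : ∑ p, P p = 1)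
    (α β : ℝ) (hα : 0 < α) (hβ : 0 < β) :
    IsLeast
      { v : ℝ | ∃ Q : 𝓧 × 𝓨 → ℝ,
          (∀ p, 0 ≤ Q p) ∧ (∑ p, Q p = 1) ∧ (∀ p, P p = 0 → Q p = 0) ∧
          v = α * (1 - β) / β * relEnt (pY Q) (pY P) + α * relEnt Q P +
              (α - 1) * shannonCond Q }
      ((α - 1) * HtildeE P α β) := by
  constructor
  · -- membership: achieved by Qstar
    refine ⟨Qstar P α β, ?_, ?_, ?_, ?_⟩
    · intro p
      exact mul_nonneg (Sf_nonneg hP hPsum p.2) (rf_nonneg hP p.1 p.2)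
    · rw [← sum_pY]
      rw [Finset.sum_congr rfl (fun y _ => pY_Qstar hP y)]
      exact sum_Sf hP hPsum
    · intro p hp
      have hc0 : pCond P p.1 p.2 = 0 := by
        simp [pCond, hp]
      simp [Qstar, rf, hc0, Real.zero_rpow hα.ne']
    · have hQ0 : ∀ p, 0 ≤ Qstar P α β p := fun p =>
        mul_nonneg (Sf_nonneg hP hPsum p.2) (rf_nonneg hP p.1 p.2)
      have hQ1 : ∑ p, Qstar P α β p = 1 := by
        rw [← sum_pY, Finset.sum_congr rfl (fun y _ => pY_Qstar hP y)]
        exact sum_Sf hP hPsum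
      have hac : ∀ p, P p = 0 → Qstar P α β p = 0 := by
        intro p hp
        have hc0 : pCond P p.1 p.2 = 0 := by simp [pCond, hp]
        simp [Qstar, rf, hc0, Real.zero_rpow hα.ne']
      rw [F_eq hP hPsum hα hβ _ hQ0 hQ1 hac]
      have ekl1 : relEnt (pY (Qstar P α β)) (Sf P α β) = 0 := by
        rw [show pY (Qstar P α β) = Sf P α β from funext (pY_Qstar hP)]
        exact relEnt_self _
      have ekl2 : relEnt (Qstar P α β)
          (fun p => pY (Qstar P α β) p.2 * rf P α p.1 p.2) = 0 := by
        rw [show (fun p : 𝓧 × 𝓨 => pY (Qstar P α β) p.2 * rf P α p.1 p.2)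
            = Qstar P α β from funext fun p => by rw [pY_Qstar hP]; rfl]
        exact relEnt_self _
      rw [ekl1, ekl2, target_eq hP hPsum hβ]
      ring
  · -- lower bound
    rintro v ⟨Q, hQ0, hQ1, hac, hv⟩
    rw [hv, F_eq hP hPsum hα hβ _ hQ0 hQ1 hac, target_eq hP hPsum hβ]
    have g1 : 0 ≤ relEnt (pY Q) (Sf P α β) := by
      apply gibbs_nonneg (pY Q) (Sf P α β) (pY_nonneg Q hQ0)
        (by rw [sum_pY]; exact hQ1) (Sf_nonneg hP hPsum)
        (le_of_eq (sum_Sf hP hPsum))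
      intro y hy
      exact Sf_pos hP hPsum (pY_Q_pos_imp Q hP hQ0 hac hy)
    have g2 : 0 ≤ relEnt Q (fun p => pY Q p.2 * rf P α p.1 p.2) := by
      apply gibbs_nonneg Q _ hQ0 hQ1
        (fun p => mul_nonneg (pY_nonneg Q hQ0 p.2) (rf_nonneg hP p.1 p.2))
      · -- sum of w is ≤ 1
        have : ∑ p : 𝓧 × 𝓨, pY Q p.2 * rf P α p.1 p.2 = 1 := by
          rw [Fintype.sum_prod_type_right]
          have key : ∀ y : 𝓨, (∑ x, pY Q y * rf P α x y) = pY Q y := by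
            intro y
            rw [← Finset.mul_sum]
            by_cases hy : 0 < pY Q y
            · rw [sum_rf hP (pY_Q_pos_imp Q hP hQ0 hac hy), mul_one]
            · rw [le_antisymm (not_lt.mp hy) (pY_nonneg Q hQ0 y), zero_mul]
          rw [Finset.sum_congr rfl (fun y _ => key y), sum_pY, hQ1]
        exact le_of_eq this
      · intro p hp
        have hPp : 0 < P p := lt_of_le_of_ne (hP p)
          (fun e => absurd (hac p e.symm) hp.ne')
        exact mul_pos (lt_of_lt_of_le hp (le_pY Q hQ0 p))
          (rf_pos hP (show 0 < P (p.1, p.2) from hPp))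
    have h1 : 0 ≤ α / β * relEnt (pY Q) (Sf P α β) :=
      mul_nonneg (le_of_lt (div_pos hα hβ)) g1
    linarith
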